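/- Let G be a finite nilpotent group, w a surjective word map on G in variables x₁,…,xₙ, and c a word with parameters from G lying in the commutator subgroup (of the free product of G with the free group). Then the equation w(x₁,…,xₙ) = c(x₁,…,xₙ) has exactly |G|^(n-1) solutions in Gⁿ. -/

import Mathlib

/-- The map `Gⁿ → G` induced by a word with parameters from `G`
(an element of the free product `G ∗ F⟨x₁,…,xₙ⟩`). -/
def paramWordMap {G : Type*} [Group G] {n : ℕ}
    (w : Monoid.Coprod G (FreeGroup (Fin n))) (v : Fin n → G) : G :=
  Monoid.Coprod.lift (MonoidHom.id G) (FreeGroup.lift v) w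

open Subgroup
open scoped IsMulCommutative

section Helpers

variable {G : Type*} [Group G] {n : ℕ}

/-- exponent sum of variable `i` in a free-group word -/
def expDeg (i : Fin n) (u : FreeGroup (Fin n)) : ℤ :=
  Multiplicative.toAdd
    (FreeGroup.lift (fun j => Multiplicative.ofAdd (if j = i then (1:ℤ) else 0)) u)

lemma lift_eq_prod_zpow {C : Type*} [CommGroup C] (z : Fin n → C) (u : FreeGroup (Fin n)) :
    FreeGroup.lift z u = ∏ i, z i ^ expDeg i u := by
  have key : FreeGroup.lift z
      = ∏ i : Fin n, (zpowersHom C (z i)).comp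
          (FreeGroup.lift (fun j => Multiplicative.ofAdd (if j = i then (1:ℤ) else 0))) := by
    apply FreeGroup.ext_hom
    intro a
    rw [MonoidHom.finset_prod_apply]
    simp only [MonoidHom.comp_apply, FreeGroup.lift_apply_of, zpowersHom_apply, toAdd_ofAdd]
    symm
    calc (∏ i, z i ^ (if a = i then (1:ℤ) else 0))
        = ∏ i, (if a = i then z i else 1) :=
          Finset.prod_congr rfl (fun i _ => by split <;> simp)
      _ = z a := by simp
  rw [key, MonoidHom.finset_prod_apply]
  rfl


/-- pointwise product with a central-valued lift -/
lemma lift_mul_central (v : Fin n → G) (z : Fin n → center G) (u : FreeGroup (Fin n)) :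
    FreeGroup.lift (fun i => v i * (z i : G)) u
      = FreeGroup.lift v u * ((FreeGroup.lift z u : center G) : G) := by
  let F : FreeGroup (Fin n) →* G :=
  { toFun := fun u => FreeGroup.lift v u * ((FreeGroup.lift z u : center G) : G)
    map_one' := by simp
    map_mul' := by
      intro a b
      have hc : ((FreeGroup.lift z a : center G) : G) ∈ center G := SetLike.coe_mem _
      have hcomm := (Subgroup.mem_center_iff.mp hc (FreeGroup.lift v b)).symm
      simp only [map_mul, Subgroup.coe_mul]
      set y := FreeGroup.lift v b
      set p := ((FreeGroup.lift z a : center G) : G)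
      rw [show FreeGroup.lift v a * y * (p * ((FreeGroup.lift z b : center G) : G))
          = FreeGroup.lift v a * (y * p) * ((FreeGroup.lift z b : center G) : G) by group,
        ← hcomm]
      group }
  have h : FreeGroup.lift (fun i => v i * (z i : G)) = F := by
    apply FreeGroup.ext_hom
    intro a
    show _ = FreeGroup.lift v (FreeGroup.of a) * ((FreeGroup.lift z (FreeGroup.of a) : center G) : G)
    simp
  rw [h]; rfl

lemma paramWordMapAux_mul_central (c : Monoid.Coprod G (FreeGroup (Fin n)))
    (v : Fin n → G) (z : Fin n → center G) :
    Monoid.Coprod.lift (MonoidHom.id G) (FreeGroup.lift (fun i => v i * (z i : G))) c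
      = Monoid.Coprod.lift (MonoidHom.id G) (FreeGroup.lift v) c *
        ((Monoid.Coprod.lift (1 : G →* center G) (FreeGroup.lift z) c : center G) : G) := by
  set A := Monoid.Coprod.lift (MonoidHom.id G) (FreeGroup.lift v) with hA
  set B := Monoid.Coprod.lift (1 : G →* center G) (FreeGroup.lift z) with hB
  let F : Monoid.Coprod G (FreeGroup (Fin n)) →* G :=
  { toFun := fun u => A u * ((B u : center G) : G)
    map_one' := by simp
    map_mul' := by
      intro a b
      have hc : ((B a : center G) : G) ∈ center G := SetLike.coe_mem _
      have hcomm := (Subgroup.mem_center_iff.mp hc (A b)).symm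
      simp only [map_mul, Subgroup.coe_mul]
      rw [show A a * A b * (((B a : center G) : G) * ((B b : center G) : G))
          = A a * (A b * ((B a : center G) : G)) * ((B b : center G) : G) by group,
        ← hcomm]
      group }
  have h : Monoid.Coprod.lift (MonoidHom.id G) (FreeGroup.lift (fun i => v i * (z i : G))) = F := by
    apply Monoid.Coprod.hom_ext
    · ext g
      show _ = A (Monoid.Coprod.inl g) * ((B (Monoid.Coprod.inl g) : center G) : G)
      simp [hA, hB]
    · ext i
      show _ = A (Monoid.Coprod.inr (FreeGroup.of i)) *
          ((B (Monoid.Coprod.inr (FreeGroup.of i)) : center G) : G)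
      simp [hA, hB]
  rw [h]; rfl

lemma central_lift_commutator_eq_one (z : Fin n → center G)
    {c : Monoid.Coprod G (FreeGroup (Fin n))}
    (hc : c ∈ commutator (Monoid.Coprod G (FreeGroup (Fin n)))) :
    Monoid.Coprod.lift (1 : G →* center G) (FreeGroup.lift z) c = 1 := by
  set B := Monoid.Coprod.lift (1 : G →* center G) (FreeGroup.lift z)
  have h1 : B c ∈ (commutator (Monoid.Coprod G (FreeGroup (Fin n)))).map B :=
    Subgroup.mem_map_of_mem B hc
  rw [commutator_def, Subgroup.map_commutator] at h1
  have h2 : ⁅Subgroup.map B ⊤, Subgroup.map B ⊤⁆ ≤ (⊥ : Subgroup (center G)) := by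
    rw [Subgroup.commutator_le]
    intro g₁ _ g₂ _
    rw [Subgroup.mem_bot, commutatorElement_eq_one_iff_commute]
    exact mul_comm g₁ g₂
  simpa using h2 h1

lemma card_fiber_mul_card {A B : Type*} [Group A] [Group B] [Finite A] (f : A →* B)
    (hf : Function.Surjective f) (b : B) :
    Nat.card {a : A // f a = b} * Nat.card B = Nat.card A := by
  obtain ⟨a₀, ha₀⟩ := hf b
  have e : {a : A // f a = b} ≃ f.ker :=
  { toFun := fun a => ⟨a₀⁻¹ * a.1, by simp [MonoidHom.mem_ker, ha₀, a.2]⟩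
    invFun := fun x => ⟨a₀ * x.1, by
      have := x.2
      simp only [MonoidHom.mem_ker] at this
      simp [this, ha₀]⟩
    left_inv := fun a => by simp
    right_inv := fun x => by simp }
  rw [Nat.card_congr e]
  have h := Subgroup.card_eq_card_quotient_mul_card_subgroup f.ker
  rw [Nat.card_congr (QuotientGroup.quotientKerEquivOfSurjective f hf).toEquiv] at h
  rw [h]; ring


lemma center_nontrivial_of_nilpotent (G : Type*) [Group G] [Group.IsNilpotent G] [Nontrivial G] :
    Nontrivial (center G) := by
  by_contra h
  have hbot : ∀ x : G, x ∈ center G → x = 1 := by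
    intro x hx
    by_contra hx1
    exact h ⟨⟨x, hx⟩, 1, by simp [Subtype.ext_iff, hx1]⟩
  have hucs : ∀ k, Subgroup.upperCentralSeries G k = ⊥ := by
    intro k
    induction k with
    | zero => exact Subgroup.upperCentralSeries_zero G
    | succ k ih =>
      ext x
      simp only [Subgroup.mem_upperCentralSeries_succ_iff, ih, Subgroup.mem_bot]
      constructor
      · intro hx
        apply hbot
        rw [Subgroup.mem_center_iff]
        intro g
        have h1 := hx g
        rw [commutatorElement_eq_one_iff_commute] at h1
        exact h1.symm
      · intro hx y
        simp [hx]
  obtain ⟨k, hk⟩ := Group.IsNilpotent.nilpotent (G := G)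
  obtain ⟨a, b, hab⟩ := exists_pair_ne G
  apply hab
  have ha : a ∈ Subgroup.upperCentralSeries G k := hk ▸ Subgroup.mem_top a
  have hb : b ∈ Subgroup.upperCentralSeries G k := hk ▸ Subgroup.mem_top b
  rw [hucs k, Subgroup.mem_bot] at ha hb
  rw [ha, hb]

lemma subsingleton_of_commutator_eq_top (G : Type*) [Group G] [Group.IsNilpotent G]
    (h : commutator G = ⊤) : Subsingleton G := by
  have hl : ∀ k, Subgroup.lowerCentralSeries (⊤ : Subgroup G) k = ⊤ := by
    intro k
    induction k with
    | zero => rfl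
    | succ k ih =>
      have hle : commutator G ≤ Subgroup.closure
          {x : G | ∃ p ∈ (⊤ : Subgroup G), ∃ q ∈ (⊤ : Subgroup G), p * q * p⁻¹ * q⁻¹ = x} := by
        rw [commutator_eq_closure]
        apply Subgroup.closure_mono
        rintro x ⟨g₁, g₂, rfl⟩
        exact ⟨g₁, Subgroup.mem_top _, g₂, Subgroup.mem_top _, rfl⟩
      rw [Subgroup.lowerCentralSeries_succ, ih, eq_top_iff]
      exact le_trans (le_of_eq h.symm) hle
  obtain ⟨k, hk⟩ := Subgroup.nilpotent_iff_lowerCentralSeries.mp ‹_›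
  constructor
  intro a b
  have ha : a ∈ Subgroup.lowerCentralSeries (⊤ : Subgroup G) k := by rw [hl k]; exact Subgroup.mem_top a
  have hb : b ∈ Subgroup.lowerCentralSeries (⊤ : Subgroup G) k := by rw [hl k]; exact Subgroup.mem_top b
  rw [hk, Subgroup.mem_bot] at ha hb
  rw [ha, hb]

lemma dvd_card_abelianization (G : Type*) [Group G] [Finite G] [Group.IsNilpotent G]
    {p : ℕ} (hp : p.Prime) (h : p ∣ Nat.card G) : p ∣ Nat.card (Abelianization G) := by
  classical
  haveI hfact : Fact p.Prime := ⟨hp⟩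
  have h05 : Group.IsNilpotent G ↔ Nonempty
      ((∀ q : (Nat.card G).primeFactors, ∀ Q : Sylow (q : ℕ) G, (Q : Subgroup G)) ≃* G) :=
    (isNilpotent_of_finite_tfae (G := G)).out 0 4
  obtain ⟨e⟩ := h05.mp inferInstance
  have hmem : p ∈ (Nat.card G).primeFactors :=
    Nat.mem_primeFactors.mpr ⟨hp, h, Nat.card_pos.ne'⟩
  set P : Sylow p G := default with hP
  let proj1 : (∀ q : (Nat.card G).primeFactors, ∀ Q : Sylow (q : ℕ) G, (Q : Subgroup G)) →*
      (∀ Q : Sylow p G, ((Q : Subgroup G) : Type _)) := Pi.evalMonoidHom _ (⟨p, hmem⟩ : (Nat.card G).primeFactors)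
  let proj2 : (∀ Q : Sylow p G, ((Q : Subgroup G) : Type _)) →* (P : Subgroup G) :=
    Pi.evalMonoidHom _ P
  let f : G →* (P : Subgroup G) := (proj2.comp proj1).comp (e.symm : G ≃* _)
  have hfsurj : Function.Surjective f := by
    intro x
    let inner : ∀ Q : Sylow p G, ((Q : Subgroup G) : Type _) := Pi.mulSingle P x
    let g0 : ∀ q : (Nat.card G).primeFactors, ∀ Q : Sylow (q : ℕ) G, ((Q : Subgroup G) : Type _) :=
      Pi.mulSingle (⟨p, hmem⟩ : (Nat.card G).primeFactors) inner
    refine ⟨e g0, ?_⟩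
    show proj2 (proj1 (e.symm (e g0))) = x
    rw [MulEquiv.symm_apply_apply]
    show g0 ⟨p, hmem⟩ P = x
    have : g0 ⟨p, hmem⟩ = inner := Pi.mulSingle_eq_same _ _
    rw [this]
    exact Pi.mulSingle_eq_same _ _
  have hcardP : Nat.card (P : Subgroup G) = p ^ (Nat.card G).factorization p :=
    P.card_eq_multiplicity
  have hkpos : (Nat.card G).factorization p ≠ 0 :=
    (hp.factorization_pos_of_dvd Nat.card_pos.ne' h).ne'
  haveI : Nontrivial (P : Subgroup G) := by
    rw [← Finite.one_lt_card_iff_nontrivial, hcardP]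
    exact Nat.one_lt_pow hkpos hp.one_lt
  have hdvd1 : Nat.card (Abelianization (P : Subgroup G)) ∣ Nat.card (P : Subgroup G) :=
    Subgroup.card_quotient_dvd_card _
  have hne1 : Nat.card (Abelianization (P : Subgroup G)) ≠ 1 := by
    intro h1
    have hcomm : commutator ((P : Subgroup G) : Type _) = ⊤ := by
      rw [← Subgroup.index_eq_one]
      exact h1
    haveI := subsingleton_of_commutator_eq_top ((P : Subgroup G) : Type _) hcomm
    exact (not_subsingleton_iff_nontrivial.mpr ‹_›) inferInstance
  have hpdvd : p ∣ Nat.card (Abelianization (P : Subgroup G)) := by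
    obtain ⟨j, hj, hjeq⟩ := (Nat.dvd_prime_pow hp).mp (hcardP ▸ hdvd1)
    cases j with
    | zero => simp [hjeq] at hne1
    | succ j => exact hjeq ▸ dvd_pow_self p (Nat.succ_ne_zero j)
  have hsurjAb : Function.Surjective (Abelianization.map f) := by
    intro y
    obtain ⟨x, hx⟩ := QuotientGroup.mk_surjective y
    obtain ⟨g, rfl⟩ := hfsurj x
    refine ⟨Abelianization.of g, ?_⟩
    rw [Abelianization.map_of]
    exact hx
  exact hpdvd.trans (Subgroup.card_dvd_of_surjective _ hsurjAb)


lemma exists_not_dvd_expDeg {G : Type*} [Group G] [Finite G] [Group.IsNilpotent G] {n : ℕ}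
    (w : FreeGroup (Fin n))
    (hsurj : Function.Surjective (fun v : Fin n → G => FreeGroup.lift v w))
    {p : ℕ} (hp : p.Prime) (hdvd : p ∣ Nat.card G) :
    ∃ i, ¬ ((p : ℤ) ∣ expDeg i w) := by
  by_contra hcon
  push_neg at hcon
  -- the word map is surjective on the abelianization
  have hsurjA : Function.Surjective
      (fun v : Fin n → Abelianization G => FreeGroup.lift v w) := by
    intro a
    obtain ⟨g, hg⟩ := QuotientGroup.mk_surjective a
    obtain ⟨v, hv⟩ := hsurj g
    refine ⟨fun i => Abelianization.of (v i), ?_⟩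
    have hcomp : (Abelianization.of : G →* Abelianization G).comp (FreeGroup.lift v)
        = FreeGroup.lift (fun i => Abelianization.of (v i)) := by
      apply FreeGroup.ext_hom; intro i; simp
    calc FreeGroup.lift (fun i => Abelianization.of (v i)) w
        = Abelianization.of (FreeGroup.lift v w) := by rw [← hcomp]; rfl
      _ = a := by rw [show FreeGroup.lift v w = g from hv]; exact hg
  -- but every value of the word map on the abelianization is a p-th power
  have hpow : ∀ a : Abelianization G, ∃ y : Abelianization G, y ^ p = a := by
    intro a
    obtain ⟨v, hv⟩ := hsurjA a
    choose k hk using hcon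
    refine ⟨∏ i, v i ^ (k i), ?_⟩
    calc (∏ i, v i ^ (k i)) ^ p
        = ∏ i, (v i ^ (k i)) ^ (p : ℤ) := by
          rw [← zpow_natCast, Finset.prod_zpow]
      _ = ∏ i, v i ^ expDeg i w := by
          refine Finset.prod_congr rfl fun i _ => ?_
          rw [hk i, mul_comm, zpow_mul]
      _ = FreeGroup.lift v w := (lift_eq_prod_zpow v w).symm
      _ = a := hv
  -- contradiction with Cauchy's theorem
  have hpA : p ∣ Nat.card (Abelianization G) := dvd_card_abelianization G hp hdvd
  haveI := Fintype.ofFinite (Abelianization G)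
  rw [Nat.card_eq_fintype_card] at hpA
  haveI : Fact p.Prime := ⟨hp⟩
  obtain ⟨b, hb⟩ := exists_prime_orderOf_dvd_card (G := Abelianization G) p hpA
  have hinj : ¬ Function.Injective (fun y : Abelianization G => y ^ p) := by
    intro hinj
    have h1 : b ^ p = (1 : Abelianization G) ^ p := by
      rw [← hb, pow_orderOf_eq_one, one_pow]
    have := hinj h1
    rw [this] at hb
    simp at hb
    exact hp.one_lt.ne' hb.symm
  exact hinj ((Finite.injective_iff_surjective).mpr (fun a => hpow a))

lemma exists_lift_eq_center {G : Type*} [Group G] [Finite G] [Group.IsNilpotent G] {n : ℕ}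
    (w : FreeGroup (Fin n))
    (hsurj : Function.Surjective (fun v : Fin n → G => FreeGroup.lift v w))
    (ζ : center G) :
    ∃ z : Fin n → center G, FreeGroup.lift z w = ζ := by
  set I : AddSubgroup ℤ :=
  { carrier := {k : ℤ | ∃ z : Fin n → center G, FreeGroup.lift z w = ζ ^ k}
    zero_mem' := ⟨1, by rw [lift_eq_prod_zpow]; simp⟩
    add_mem' := by
      rintro a b ⟨z, hz⟩ ⟨z', hz'⟩
      refine ⟨fun i => z i * z' i, ?_⟩
      rw [lift_eq_prod_zpow] at hz hz' ⊢
      calc ∏ i, (z i * z' i) ^ expDeg i w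
          = (∏ i, z i ^ expDeg i w) * ∏ i, z' i ^ expDeg i w := by
            rw [← Finset.prod_mul_distrib]
            exact Finset.prod_congr rfl fun i _ => mul_zpow _ _ _
        _ = ζ ^ (a + b) := by rw [hz, hz', zpow_add]
    neg_mem' := by
      rintro a ⟨z, hz⟩
      refine ⟨fun i => (z i)⁻¹, ?_⟩
      rw [lift_eq_prod_zpow] at hz ⊢
      calc ∏ i, (z i)⁻¹ ^ expDeg i w
          = (∏ i, z i ^ expDeg i w)⁻¹ := by
            rw [← Finset.prod_inv_distrib]
            exact Finset.prod_congr rfl fun i _ => inv_zpow _ _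
        _ = ζ ^ (-a) := by rw [hz, zpow_neg]
  } with hI
  have hm : ((Nat.card G : ℤ)) ∈ I := by
    have hζ : ζ ^ (Nat.card G : ℤ) = 1 := by
      rw [zpow_natCast]
      have h1 : orderOf ζ ∣ Nat.card G :=
        dvd_trans (orderOf_dvd_natCard ζ) (Subgroup.card_subgroup_dvd_card _)
      exact orderOf_dvd_iff_pow_eq_one.mp h1
    exact ⟨1, by rw [lift_eq_prod_zpow, hζ]; simp⟩
  have hd : ∀ i, expDeg i w ∈ I := by
    intro i
    refine ⟨fun j => if j = i then ζ else 1, ?_⟩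
    rw [lift_eq_prod_zpow]
    calc ∏ j, (if j = i then ζ else 1) ^ expDeg j w
        = ∏ j, (if j = i then ζ ^ expDeg j w else 1) := by
          refine Finset.prod_congr rfl fun j _ => ?_
          split <;> simp
      _ = ζ ^ expDeg i w := by rw [Finset.prod_ite_eq']; simp
  obtain ⟨g, hg⟩ := Int.subgroup_cyclic I
  have hmemdvd : ∀ x : ℤ, x ∈ I ↔ g ∣ x := by
    intro x
    rw [hg, AddSubgroup.mem_closure_singleton]
    constructor
    · rintro ⟨k, rfl⟩; exact Dvd.intro_left k rfl
    · rintro ⟨k, rfl⟩; exact ⟨k, (mul_comm g k ▸ (zsmul_eq_mul g k).symm ▸ rfl)⟩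
  have hone : (1 : ℤ) ∈ I := by
    rcases eq_or_ne g 0 with h0 | h0
    · exfalso
      have := (hmemdvd _).mp hm
      rw [h0] at this
      have := zero_dvd_iff.mp this
      have hpos : (0 : ℤ) < (Nat.card G : ℤ) := by exact_mod_cast Nat.card_pos
      omega
    rcases eq_or_ne g.natAbs 1 with h1 | h1
    · rw [hmemdvd]
      rcases Int.natAbs_eq_iff.mp h1 with h | h <;> rw [h] <;> simp
    · exfalso
      obtain ⟨p, hp, hpdvd⟩ := Nat.exists_prime_and_dvd h1
      have hpm : p ∣ Nat.card G := by
        have hgm : g ∣ (Nat.card G : ℤ) := (hmemdvd _).mp hm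
        have : (g.natAbs : ℤ) ∣ (Nat.card G : ℤ) := (Int.natAbs_dvd).mpr hgm
        exact_mod_cast Int.natCast_dvd_natCast.mp
          (dvd_trans (Int.natCast_dvd_natCast.mpr hpdvd) this)
      obtain ⟨i, hi⟩ := exists_not_dvd_expDeg w hsurj hp hpm
      apply hi
      have hgd : g ∣ expDeg i w := (hmemdvd _).mp (hd i)
      have hpg : (p : ℤ) ∣ g := by
        have h2 : (p : ℤ) ∣ (g.natAbs : ℤ) := Int.natCast_dvd_natCast.mpr hpdvd
        exact h2.trans (Int.natAbs_dvd.mpr dvd_rfl)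
      exact hpg.trans hgd
  obtain ⟨z, hz⟩ := hone
  exact ⟨z, by rw [hz, zpow_one]⟩

end Helpers

universe u

theorem key (k : ℕ) : ∀ (G : Type u) [Group G] [Finite G] [Group.IsNilpotent G],
    Nat.card G ≤ k → ∀ (n : ℕ) (w : FreeGroup (Fin n)),
    Function.Surjective (fun v : Fin n → G => FreeGroup.lift v w) →
    ∀ c ∈ commutator (Monoid.Coprod G (FreeGroup (Fin n))),
    Nat.card {v : Fin n → G // FreeGroup.lift v w = paramWordMap c v} =
      Nat.card G ^ (n - 1) := by
  induction k with
  | zero =>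
    intro G _ _ _ hk
    exact absurd (Nat.card_pos.trans_le hk) (lt_irrefl 0)
  | succ k IH =>
    intro G _ _ _ hk n w hsurj c hc
    classical
    by_cases hG : Subsingleton G
    · have h1 : Nat.card G = 1 := Nat.card_eq_one_iff_unique.mpr ⟨‹_›, ⟨1⟩⟩
      haveI hs : Subsingleton {v : Fin n → G // FreeGroup.lift v w = paramWordMap c v} :=
        ⟨fun a b => Subtype.ext (funext fun i => Subsingleton.elim _ _)⟩
      haveI hne : Nonempty {v : Fin n → G // FreeGroup.lift v w = paramWordMap c v} :=
        ⟨⟨fun _ => 1, Subsingleton.elim _ _⟩⟩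
      rw [Nat.card_eq_one_iff_unique.mpr ⟨hs, hne⟩, h1, one_pow]
    · haveI : Nontrivial G := not_subsingleton_iff_nontrivial.mp hG
      haveI : Nontrivial (center G) := center_nontrivial_of_nilpotent G
      have hn : n ≠ 0 := by
        rintro rfl
        obtain ⟨a, b, hab⟩ := exists_pair_ne G
        obtain ⟨va, hva⟩ := hsurj a
        obtain ⟨vb, hvb⟩ := hsurj b
        apply hab
        rw [← hva, ← hvb, Subsingleton.elim va vb]
      set Z := Subgroup.center G with hZ
      let Q := G ⧸ Z
      let π : G →* Q := QuotientGroup.mk' Z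
      have hπsurj : Function.Surjective π := QuotientGroup.mk'_surjective Z
      have hcardZ : 1 < Nat.card Z := Finite.one_lt_card_iff_nontrivial.mpr ‹_›
      have hcardG : Nat.card G = Nat.card Q * Nat.card Z :=
        Subgroup.card_eq_card_quotient_mul_card_subgroup Z
      have hQlt : Nat.card Q < Nat.card G := by
        rw [hcardG]
        exact (lt_mul_iff_one_lt_right Nat.card_pos).mpr hcardZ
      have hkQ : Nat.card Q ≤ k := by omega
      -- surjectivity on the quotient
      have hliftπ : ∀ v : Fin n → G,
          π (FreeGroup.lift v w) = FreeGroup.lift (fun i => π (v i)) w := by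
        intro v
        have hcomp : (π.comp (FreeGroup.lift v)) = FreeGroup.lift (fun i => π (v i)) :=
          FreeGroup.ext_hom _ _ (fun i => by simp)
        rw [← hcomp]; rfl
      have hsurjQ : Function.Surjective (fun v : Fin n → Q => FreeGroup.lift v w) := by
        intro q
        obtain ⟨g, hg⟩ := hπsurj q
        obtain ⟨v, hv⟩ := hsurj g
        refine ⟨fun i => π (v i), ?_⟩
        show FreeGroup.lift (fun i => π (v i)) w = q
        rw [← hliftπ, show FreeGroup.lift v w = g from hv]
        exact hg
      let Φc : Monoid.Coprod G (FreeGroup (Fin n)) →* Monoid.Coprod Q (FreeGroup (Fin n)) :=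
        Monoid.Coprod.map π (MonoidHom.id _)
      have hcQ : Φc c ∈ commutator (Monoid.Coprod Q (FreeGroup (Fin n))) := by
        have h1 : Φc c ∈ (commutator _).map Φc := Subgroup.mem_map_of_mem _ hc
        rw [commutator_def, Subgroup.map_commutator] at h1
        rw [commutator_def]
        exact Subgroup.commutator_mono le_top le_top h1
      have hcompat : ∀ v : Fin n → G,
          π (paramWordMap c v) = paramWordMap (Φc c) (fun i => π (v i)) := by
        intro v
        have h2 : π.comp (Monoid.Coprod.lift (MonoidHom.id G) (FreeGroup.lift v))
            = (Monoid.Coprod.lift (MonoidHom.id Q)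
                (FreeGroup.lift (fun i => π (v i)))).comp Φc := by
          apply Monoid.Coprod.hom_ext
          · ext g
            simp [Φc, Monoid.Coprod.map_apply_inl, Monoid.Coprod.lift_apply_inl]
          · ext i
            simp [Φc, Monoid.Coprod.map_apply_inr, Monoid.Coprod.lift_apply_inr]
        exact DFunLike.congr_fun h2 c
      have hIH := IH Q hkQ n w hsurjQ (Φc c) hcQ
      -- the central word-map homomorphism
      let Φw : (Fin n → Z) →* Z := MonoidHom.mk' (fun z => FreeGroup.lift z w) (by
        intro z z'
        show FreeGroup.lift (z * z') w = FreeGroup.lift z w * FreeGroup.lift z' w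
        rw [lift_eq_prod_zpow, lift_eq_prod_zpow, lift_eq_prod_zpow,
          ← Finset.prod_mul_distrib]
        exact Finset.prod_congr rfl fun i _ => mul_zpow _ _ _)
      have hΦwsurj : Function.Surjective Φw := fun ζ => exists_lift_eq_center w hsurj ζ
      set SolG := {v : Fin n → G // FreeGroup.lift v w = paramWordMap c v} with hSolG
      set SolQ := {q : Fin n → Q // FreeGroup.lift q w = paramWordMap (Φc c) q} with hSolQ
      let Θ : SolG → SolQ := fun x => ⟨fun i => π (x.1 i), by
        rw [← hliftπ, x.2, hcompat]⟩
      have hfiber : ∀ s : SolQ, Nat.card {x : SolG // Θ x = s} = Nat.card Z ^ (n - 1) := by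
        intro s
        let v₀ : Fin n → G := fun i => Quotient.out (s.1 i)
        have hv₀ : ∀ i, π (v₀ i) = s.1 i := fun i => QuotientGroup.out_eq' _
        have hπv₀ : (fun i => π (v₀ i)) = s.1 := funext hv₀
        have htmem : (FreeGroup.lift v₀ w)⁻¹ * paramWordMap c v₀ ∈ Z := by
          have h1 : π ((FreeGroup.lift v₀ w)⁻¹ * paramWordMap c v₀) = 1 := by
            rw [map_mul, map_inv, hliftπ, hcompat, hπv₀, s.2, inv_mul_cancel]
          rw [← QuotientGroup.ker_mk' Z]
          exact MonoidHom.mem_ker.mpr h1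
        set t : Z := ⟨_, htmem⟩ with ht
        have keyiff : ∀ (v : Fin n → G) (z : Fin n → Z), (∀ i, v i = v₀ i * (z i : G)) →
            (FreeGroup.lift v w = paramWordMap c v ↔ FreeGroup.lift z w = t) := by
          intro v z hvz
          have hveq : v = fun i => v₀ i * (z i : G) := funext hvz
          have hB := central_lift_commutator_eq_one (G := G) z hc
          have h1 : FreeGroup.lift v w = FreeGroup.lift v₀ w * ((FreeGroup.lift z w : Z) : G) := by
            rw [hveq]; exact lift_mul_central v₀ z w
          have h2 : paramWordMap c v = paramWordMap c v₀ := by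
            rw [hveq]
            show Monoid.Coprod.lift _ _ c = Monoid.Coprod.lift _ _ c
            rw [paramWordMapAux_mul_central c v₀ z, hB]
            simp
          rw [h1, h2]
          constructor
          · intro h3
            apply Subtype.ext
            show ((FreeGroup.lift z w : Z) : G) = (FreeGroup.lift v₀ w)⁻¹ * paramWordMap c v₀
            rw [← h3]
            group
          · intro h3
            have h4 : ((FreeGroup.lift z w : Z) : G)
                = (FreeGroup.lift v₀ w)⁻¹ * paramWordMap c v₀ := congrArg _ h3
            rw [h4]
            group
        have hmemz : ∀ (x : SolG), Θ x = s → ∀ i, (v₀ i)⁻¹ * x.1 i ∈ Z := by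
          intro x hx i
          have hxi : π (x.1 i) = s.1 i := congrFun (congrArg Subtype.val hx) i
          rw [← QuotientGroup.ker_mk' Z]
          apply MonoidHom.mem_ker.mpr
          rw [map_mul, map_inv, hv₀ i, hxi, inv_mul_cancel]
        have e : {x : SolG // Θ x = s} ≃ {z : Fin n → Z // Φw z = t} :=
        { toFun := fun x =>
            ⟨fun i => ⟨(v₀ i)⁻¹ * x.1.1 i, hmemz x.1 x.2 i⟩, by
              show FreeGroup.lift _ w = t
              refine (keyiff x.1.1 (fun i => ⟨(v₀ i)⁻¹ * x.1.1 i, hmemz x.1 x.2 i⟩)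
                (fun i => by show x.1.1 i = v₀ i * ((v₀ i)⁻¹ * x.1.1 i); group)).mp x.1.2⟩
          invFun := fun z =>
            ⟨⟨fun i => v₀ i * (z.1 i : G),
              (keyiff _ z.1 (fun i => rfl)).mpr z.2⟩, by
              apply Subtype.ext
              apply funext
              intro i
              show π (v₀ i * (z.1 i : G)) = s.1 i
              have hz1 : π ((z.1 i : G)) = 1 := by
                apply MonoidHom.mem_ker.mp
                rw [QuotientGroup.ker_mk' Z]
                exact (z.1 i).2
              rw [map_mul, hz1, mul_one, hv₀ i]⟩
          left_inv := fun x => by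
            apply Subtype.ext
            apply Subtype.ext
            funext i
            show v₀ i * ((v₀ i)⁻¹ * x.1.1 i) = x.1.1 i
            group
          right_inv := fun z => by
            apply Subtype.ext
            funext i
            apply Subtype.ext
            show (v₀ i)⁻¹ * (v₀ i * (z.1 i : G)) = (z.1 i : G)
            group }
        rw [Nat.card_congr e]
        have hcf := card_fiber_mul_card Φw hΦwsurj t
        have hcard_fun : Nat.card (Fin n → Z) = Nat.card Z ^ n := by
          rw [Nat.card_fun]
          simp
        rw [hcard_fun] at hcf
        have hZpos : 0 < Nat.card Z := Nat.card_pos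
        have hsplit : Nat.card Z ^ n = Nat.card Z ^ (n - 1) * Nat.card Z := by
          rw [← pow_succ]
          congr 1
          omega
        rw [hsplit] at hcf
        exact Nat.eq_of_mul_eq_mul_right hZpos hcf
      haveI : Fintype SolG := Fintype.ofFinite _
      haveI : Fintype SolQ := Fintype.ofFinite _
      haveI hft : ∀ s : SolQ, Fintype {x : SolG // Θ x = s} := fun s => Fintype.ofFinite _
      have hsum : Nat.card SolG = Nat.card SolQ * (Nat.card Z ^ (n - 1)) := by
        rw [← Nat.card_congr (Equiv.sigmaFiberEquiv Θ)]
        rw [Nat.card_eq_fintype_card, Fintype.card_sigma,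
          Nat.card_eq_fintype_card (α := SolQ)]
        calc ∑ s : SolQ, Fintype.card {x : SolG // Θ x = s}
            = ∑ _s : SolQ, Nat.card Z ^ (n - 1) := by
              refine Finset.sum_congr rfl fun s _ => ?_
              rw [← Nat.card_eq_fintype_card, hfiber s]
          _ = Fintype.card SolQ * Nat.card Z ^ (n - 1) := by
              rw [Finset.sum_const, Finset.card_univ, smul_eq_mul]
      rw [hsum, hIH, hcardG, mul_pow]

/-- For a finite nilpotent group `G`, a word `w` in `n`
variables inducing a surjective word map on `G`, and a word `c` with
parameters from `G` lying in the commutator subgroup of the free product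
`G ∗ F⟨x₁,…,xₙ⟩`, the equation `w(x̄) = c(x̄)` has exactly `|G|^(n-1)`
solutions in `Gⁿ`. -/
theorem stmt_19 (G : Type*) [Group G] [Finite G] [Group.IsNilpotent G]
    (n : ℕ) (w : FreeGroup (Fin n))
    (hsurj : Function.Surjective (fun v : Fin n → G => FreeGroup.lift v w))
    (c : Monoid.Coprod G (FreeGroup (Fin n)))
    (hc : c ∈ commutator (Monoid.Coprod G (FreeGroup (Fin n)))) :
    Nat.card {v : Fin n → G // FreeGroup.lift v w = paramWordMap c v} =
      Nat.card G ^ (n - 1) :=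
  key (Nat.card G) G le_rfl n w hsurj c hc
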